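/- arXiv:2412.11295 — 2 statements merged into one kernel-verified Lean document; each statement's English description precedes it below -/
import Mathlib

section
/- Let R be a relational doctrine with quotients on a category C. Then R is balanced if and only if every surjective arrow of C is a quotient arrow of some R-equivalence relation. -/
open CategoryTheory

universe w w' v v' u u'

/-- A relational doctrine on a category `C` with fibres `P X Y` (posets):
a contravariant functor `(C^op × C^op) → Pos` with identities, composition and converse. -/
structure RelDoctrine (C : Type u) [Category.{v} C] (P : C → C → Type w)
    [∀ X Y : C, PartialOrder (P X Y)] where
  reidx : ∀ {A X B Y : C}, (A ⟶ X) → (B ⟶ Y) → P X Y → P A B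
  reidx_mono : ∀ {A X B Y : C} (f : A ⟶ X) (g : B ⟶ Y), Monotone (reidx f g)
  reidx_id : ∀ {X Y : C} (α : P X Y), reidx (𝟙 X) (𝟙 Y) α = α
  reidx_comp :
    ∀ {A X X' B Y Y' : C} (f : A ⟶ X) (f' : X ⟶ X') (g : B ⟶ Y) (g' : Y ⟶ Y') (α : P X' Y'),
      reidx (f ≫ f') (g ≫ g') α = reidx f g (reidx f' g' α)
  d : ∀ X : C, P X X
  comp : ∀ {X Y Z : C}, P X Y → P Y Z → P X Z
  comp_mono : ∀ {X Y Z : C} {α α' : P X Y} {β β' : P Y Z},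
      α ≤ α' → β ≤ β' → comp α β ≤ comp α' β'
  conv : ∀ {X Y : C}, P X Y → P Y X
  conv_mono : ∀ {X Y : C} {α α' : P X Y}, α ≤ α' → conv α ≤ conv α'
  d_le_reidx : ∀ {X Y : C} (f : X ⟶ Y), d X ≤ reidx f f (d Y)
  comp_reidx_le : ∀ {X A Y B Z W : C} (f : X ⟶ A) (g : Y ⟶ B) (h : Z ⟶ W)
      (α : P A B) (β : P B W),
      comp (reidx f g α) (reidx g h β) ≤ reidx f h (comp α β)
  conv_reidx_le : ∀ {X A Y B : C} (f : X ⟶ A) (g : Y ⟶ B) (α : P A B),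
      conv (reidx f g α) ≤ reidx g f (conv α)
  comp_assoc : ∀ {X Y Z W : C} (α : P X Y) (β : P Y Z) (γ : P Z W),
      comp α (comp β γ) = comp (comp α β) γ
  d_comp : ∀ {X Y : C} (α : P X Y), comp (d X) α = α
  comp_d : ∀ {X Y : C} (α : P X Y), comp α (d Y) = α
  conv_comp : ∀ {X Y Z : C} (α : P X Y) (β : P Y Z),
      conv (comp α β) = comp (conv β) (conv α)
  conv_d : ∀ X : C, conv (d X) = d X
  conv_conv : ∀ {X Y : C} (α : P X Y), conv (conv α) = α

namespace RelDoctrine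

variable {C : Type u} [Category.{v} C] {P : C → C → Type w} [∀ X Y : C, PartialOrder (P X Y)]

/-- The graph of an arrow `f : X ⟶ Y` is `R(f, id_Y)(d_Y)`. -/
def gr (D : RelDoctrine C P) {X Y : C} (f : X ⟶ Y) : P X Y :=
  D.reidx f (𝟙 Y) (D.d Y)

/-- `α` is functional: `α° ; α ≤ d_Y`. -/
def Functional (D : RelDoctrine C P) {X Y : C} (α : P X Y) : Prop :=
  D.comp (D.conv α) α ≤ D.d Y

/-- `α` is total: `d_X ≤ α ; α°`. -/
def Total (D : RelDoctrine C P) {X Y : C} (α : P X Y) : Prop :=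
  D.d X ≤ D.comp α (D.conv α)

/-- `α` is injective: `α ; α° ≤ d_X`. -/
def InjectiveRel (D : RelDoctrine C P) {X Y : C} (α : P X Y) : Prop :=
  D.comp α (D.conv α) ≤ D.d X

/-- `α` is surjective: `d_Y ≤ α° ; α`. -/
def SurjectiveRel (D : RelDoctrine C P) {X Y : C} (α : P X Y) : Prop :=
  D.d Y ≤ D.comp (D.conv α) α

/-- The kernel of an arrow `f` is `gr(f) ; gr(f)°`. -/
def kernelOf (D : RelDoctrine C P) {X Y : C} (f : X ⟶ Y) : P X X :=
  D.comp (D.gr f) (D.conv (D.gr f))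

/-- An `R`-equivalence relation: reflexive, symmetric, transitive. -/
def IsEquivRel (D : RelDoctrine C P) {X : C} (ρ : P X X) : Prop :=
  D.d X ≤ ρ ∧ D.conv ρ ≤ ρ ∧ D.comp ρ ρ ≤ ρ

/-- `q : X ⟶ W` is a quotient arrow of the equivalence relation `ρ` on `X`. -/
def IsQuotientArrow (D : RelDoctrine C P) {X W : C} (ρ : P X X) (q : X ⟶ W) : Prop :=
  ρ ≤ D.kernelOf q ∧
    ∀ (Z : C) (f : X ⟶ Z), ρ ≤ D.kernelOf f → ∃! h : W ⟶ Z, f = q ≫ h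

/-- The quotient arrow `q` of `ρ` is effective: `ρ = gr(q) ; gr(q)°`. -/
def Effective (D : RelDoctrine C P) {X W : C} (ρ : P X X) (q : X ⟶ W) : Prop :=
  ρ = D.kernelOf q

/-- The arrow `q` is descent: `d_W ≤ gr(q)° ; gr(q)`. -/
def Descent (D : RelDoctrine C P) {X W : C} (q : X ⟶ W) : Prop :=
  D.d W ≤ D.comp (D.conv (D.gr q)) (D.gr q)

/-- `D` has quotients: every equivalence relation admits an effective descent quotient arrow. -/
def HasQuotients (D : RelDoctrine C P) : Prop :=
  ∀ (X : C) (ρ : P X X), D.IsEquivRel ρ →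
    ∃ (W : C) (q : X ⟶ W), D.IsQuotientArrow ρ q ∧ D.Effective ρ q ∧ D.Descent q

/-- `f ≐ g` : the arrows `f, g` are `R`-equal, i.e. `d_X ≤ R(f,g)(d_Y)`. -/
def RExtEq (D : RelDoctrine C P) {X Y : C} (f g : X ⟶ Y) : Prop :=
  D.d X ≤ D.reidx f g (D.d Y)

/-- `D` is extensional: `R`-equal arrows are equal. -/
def Extensional (D : RelDoctrine C P) : Prop :=
  ∀ (X Y : C) (f g : X ⟶ Y), D.RExtEq f g → f = g

/-- `D` is balanced: every bijective arrow is an isomorphism. -/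
def BalancedDoc (D : RelDoctrine C P) : Prop :=
  ∀ (X Y : C) (f : X ⟶ Y), D.InjectiveRel (D.gr f) → D.SurjectiveRel (D.gr f) → IsIso f

/-- `Q` is `R`-projective with respect to quotient arrows. -/
def ProjectiveObj (D : RelDoctrine C P) (Q : C) : Prop :=
  ∀ (X Y : C) (f : Q ⟶ Y) (q : X ⟶ Y) (ρ : P X X),
    D.IsEquivRel ρ → D.IsQuotientArrow ρ q → ∃ h : Q ⟶ X, f = h ≫ q

/-- Descent data with respect to equivalence relations `ρ` and `σ` : `ρ° ; α ; σ ≤ α`. -/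
def Des (D : RelDoctrine C P) {X Y : C} (ρ : P X X) (σ : P Y Y) (α : P X Y) : Prop :=
  D.comp (D.comp (D.conv ρ) α) σ ≤ α

/-- The rule of unique choice: every functional total relation contains the graph of an arrow. -/
def RUC (D : RelDoctrine C P) : Prop :=
  ∀ (X Y : C) (α : P X Y), D.Functional α → D.Total α → ∃ f : X ⟶ Y, D.gr f ≤ α

end RelDoctrine

variable {C : Type u} [Category.{v} C] {P : C → C → Type w} [∀ X Y : C, PartialOrder (P X Y)]

namespace RelDoctrine

variable (D : RelDoctrine C P)

lemma conv_reidx {X A Y B : C} (f : X ⟶ A) (g : Y ⟶ B) (α : P A B) :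
    D.conv (D.reidx f g α) = D.reidx g f (D.conv α) := by
  refine le_antisymm (D.conv_reidx_le f g α) ?_
  have h1 := D.conv_reidx_le g f (D.conv α)
  rw [D.conv_conv] at h1
  have h2 := D.conv_mono h1
  rwa [D.conv_conv] at h2

lemma conv_gr {X Y : C} (f : X ⟶ Y) :
    D.conv (D.gr f) = D.reidx (𝟙 Y) f (D.d Y) := by
  rw [gr, conv_reidx, D.conv_d]

lemma gr_functional {X Y : C} (f : X ⟶ Y) :
    D.comp (D.conv (D.gr f)) (D.gr f) ≤ D.d Y := by
  rw [conv_gr, gr]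
  have h := D.comp_reidx_le (𝟙 Y) f (𝟙 Y) (D.d Y) (D.d Y)
  rwa [D.d_comp, D.reidx_id] at h

lemma d_le_reidx_gr {X Y : C} (f : X ⟶ Y) :
    D.d X ≤ D.reidx (𝟙 X) f (D.gr f) := by
  have h := D.d_le_reidx f
  have e := D.reidx_comp (𝟙 X) f f (𝟙 Y) (D.d Y)
  rw [Category.id_comp, Category.comp_id] at e
  rw [e] at h
  exact h

lemma d_le_reidx_conv_gr {X Y : C} (f : X ⟶ Y) :
    D.d X ≤ D.reidx f (𝟙 X) (D.conv (D.gr f)) := by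
  have h := D.d_le_reidx f
  have e := D.reidx_comp f (𝟙 Y) (𝟙 X) f (D.d Y)
  rw [Category.id_comp, Category.comp_id] at e
  rw [e, ← D.conv_gr] at h
  exact h

lemma gr_total {X Y : C} (f : X ⟶ Y) :
    D.d X ≤ D.comp (D.gr f) (D.conv (D.gr f)) := by
  calc D.d X = D.comp (D.d X) (D.d X) := (D.d_comp _).symm
    _ ≤ D.comp (D.reidx (𝟙 X) f (D.gr f)) (D.reidx f (𝟙 X) (D.conv (D.gr f))) :=
        D.comp_mono (D.d_le_reidx_gr f) (D.d_le_reidx_conv_gr f)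
    _ ≤ D.reidx (𝟙 X) (𝟙 X) (D.comp (D.gr f) (D.conv (D.gr f))) :=
        D.comp_reidx_le _ _ _ _ _
    _ = _ := D.reidx_id _

lemma conv_gr_comp_reidx_le {X Y B : C} (f : X ⟶ Y) (β : P Y B) :
    D.comp (D.conv (D.gr f)) (D.reidx f (𝟙 B) β) ≤ β := by
  rw [conv_gr]
  have h := D.comp_reidx_le (𝟙 Y) f (𝟙 B) (D.d Y) β
  rwa [D.d_comp, D.reidx_id] at h

lemma reidx_fst {X Y B : C} (f : X ⟶ Y) (β : P Y B) :
    D.reidx f (𝟙 B) β = D.comp (D.gr f) β := by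
  refine le_antisymm ?_ ?_
  · calc D.reidx f (𝟙 B) β = D.comp (D.d X) (D.reidx f (𝟙 B) β) := (D.d_comp _).symm
      _ ≤ D.comp (D.comp (D.gr f) (D.conv (D.gr f))) (D.reidx f (𝟙 B) β) :=
          D.comp_mono (D.gr_total f) le_rfl
      _ = D.comp (D.gr f) (D.comp (D.conv (D.gr f)) (D.reidx f (𝟙 B) β)) :=
          (D.comp_assoc _ _ _).symm
      _ ≤ D.comp (D.gr f) β := D.comp_mono le_rfl (D.conv_gr_comp_reidx_le f β)
  · have h := D.comp_reidx_le f (𝟙 Y) (𝟙 B) (D.d Y) β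
    rw [D.reidx_id, D.d_comp] at h
    exact h

lemma gr_id (X : C) : D.gr (𝟙 X) = D.d X := by
  rw [gr, D.reidx_id]

lemma gr_comp {X Y Z : C} (f : X ⟶ Y) (g : Y ⟶ Z) :
    D.gr (f ≫ g) = D.comp (D.gr f) (D.gr g) := by
  have e := D.reidx_comp f g (𝟙 Z) (𝟙 Z) (D.d Z)
  rw [Category.comp_id] at e
  show D.reidx (f ≫ g) (𝟙 Z) (D.d Z) = _
  rw [e, D.reidx_fst]
  rfl

lemma kernelOf_id (X : C) : D.kernelOf (𝟙 X) = D.d X := by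
  rw [kernelOf, gr_id, D.conv_d, D.d_comp]

end RelDoctrine

/-- A relational doctrine with quotients is balanced iff every surjective arrow is a
quotient arrow of some equivalence relation. -/
theorem statement5 (D : RelDoctrine C P) (hquot : D.HasQuotients) :
    D.BalancedDoc ↔
      ∀ (X Y : C) (f : X ⟶ Y), D.SurjectiveRel (D.gr f) →
        ∃ ρ : P X X, D.IsEquivRel ρ ∧ D.IsQuotientArrow ρ f := by
  constructor
  · -- balanced → every surjective arrow is a quotient arrow
    intro hbal X Y f hsurj
    set ρ := D.kernelOf f with hρ
    have hequiv : D.IsEquivRel ρ := by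
      refine ⟨D.gr_total f, ?_, ?_⟩
      · rw [hρ, RelDoctrine.kernelOf, D.conv_comp, D.conv_conv]
      · rw [hρ, RelDoctrine.kernelOf]
        calc D.comp (D.comp (D.gr f) (D.conv (D.gr f)))
              (D.comp (D.gr f) (D.conv (D.gr f)))
            = D.comp (D.gr f) (D.comp (D.comp (D.conv (D.gr f)) (D.gr f))
                (D.conv (D.gr f))) := by simp only [D.comp_assoc]
          _ ≤ D.comp (D.gr f) (D.comp (D.d Y) (D.conv (D.gr f))) :=
              D.comp_mono le_rfl (D.comp_mono (D.gr_functional f) le_rfl)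
          _ = D.comp (D.gr f) (D.conv (D.gr f)) := by rw [D.d_comp]
    obtain ⟨W, q, hq, heff, hdes⟩ := hquot X ρ hequiv
    obtain ⟨h, hfac, -⟩ := hq.2 Y f le_rfl
    -- key kernel equality
    have e1 : D.comp (D.comp (D.gr q) (D.gr h))
        (D.comp (D.conv (D.gr h)) (D.conv (D.gr q))) =
        D.comp (D.gr q) (D.conv (D.gr q)) := by
      have e : ρ = D.kernelOf q := heff
      rw [hρ, RelDoctrine.kernelOf, hfac, D.gr_comp, D.conv_comp] at e
      exact e.symm ▸ rfl
    set a := D.gr q with ha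
    set b := D.gr h with hb
    -- h is injective
    have hinj : D.comp b (D.conv b) ≤ D.d W := by
      have step1 : D.comp b (D.conv b) ≤
          D.comp (D.comp (D.conv a) a)
            (D.comp (D.comp b (D.conv b)) (D.comp (D.conv a) a)) := by
        calc D.comp b (D.conv b)
            = D.comp (D.d W) (D.comp (D.comp b (D.conv b)) (D.d W)) := by
              rw [D.comp_d, D.d_comp]
          _ ≤ _ := D.comp_mono hdes (D.comp_mono le_rfl hdes)
      have step2 : D.comp (D.comp (D.conv a) a)
          (D.comp (D.comp b (D.conv b)) (D.comp (D.conv a) a)) =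
          D.comp (D.conv a)
            (D.comp (D.comp (D.comp a b) (D.comp (D.conv b) (D.conv a))) a) := by
        simp only [D.comp_assoc]
      have step3 : D.comp (D.conv a)
          (D.comp (D.comp (D.comp a b) (D.comp (D.conv b) (D.conv a))) a) =
          D.comp (D.comp (D.conv a) a) (D.comp (D.conv a) a) := by
        rw [e1]; simp only [D.comp_assoc]
      calc D.comp b (D.conv b) ≤ _ := step1
        _ = _ := step2
        _ = _ := step3
        _ ≤ D.comp (D.d W) (D.d W) :=
            D.comp_mono (D.gr_functional q) (D.gr_functional q)
        _ = D.d W := D.d_comp _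
    -- h is surjective
    have hs : D.d Y ≤ D.comp (D.conv b) b := by
      have h1 := hsurj
      rw [RelDoctrine.SurjectiveRel, hfac, D.gr_comp, D.conv_comp] at h1
      calc D.d Y ≤ D.comp (D.comp (D.conv b) (D.conv a)) (D.comp a b) := h1
        _ = D.comp (D.comp (D.comp (D.conv b) (D.conv a)) a) b := by
            simp only [D.comp_assoc]
        _ = D.comp (D.conv b) (D.comp (D.comp (D.conv a) a) b) := by
            simp only [D.comp_assoc]
        _ ≤ D.comp (D.conv b) (D.comp (D.d W) b) :=
            D.comp_mono le_rfl (D.comp_mono (D.gr_functional q) le_rfl)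
        _ = D.comp (D.conv b) b := by rw [D.d_comp]
    have : IsIso h := hbal W Y h hinj hs
    refine ⟨ρ, hequiv, le_rfl, ?_⟩
    intro Z g hg
    obtain ⟨k₀, hk₀, hk₀u⟩ := hq.2 Z g hg
    refine ⟨inv h ≫ k₀, ?_, ?_⟩
    · show g = f ≫ (inv h ≫ k₀)
      rw [hfac, Category.assoc, IsIso.hom_inv_id_assoc]
      exact hk₀
    · intro k' hk'
      have : h ≫ k' = k₀ := by
        apply hk₀u
        show g = q ≫ (h ≫ k')
        rw [hk', hfac, Category.assoc]
      rw [← this, IsIso.inv_hom_id_assoc]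
  · -- converse
    intro hyp X Y f hinj hsurj
    obtain ⟨ρ, hρeq, hqa⟩ := hyp X Y f hsurj
    have hρd : ρ ≤ D.kernelOf (𝟙 X) := by
      rw [D.kernelOf_id]
      exact hqa.1.trans hinj
    obtain ⟨h, hh, -⟩ := hqa.2 X (𝟙 X) hρd
    obtain ⟨k, hk, hku⟩ := hqa.2 Y f hqa.1
    have h1 : (𝟙 Y : Y ⟶ Y) = k := hku (𝟙 Y) (by simp)
    have h2 : h ≫ f = k := hku (h ≫ f)
      (by show f = f ≫ (h ≫ f); rw [← Category.assoc, ← hh, Category.id_comp])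
    exact ⟨h, hh.symm, by rw [h2, ← h1]⟩
end

section
/- Let R be a cartesian relational doctrine satisfying Frobenius reciprocity. Then the Beck–Chevalley condition holds: for every relation α ∈ R(X,Y) and every object A, one has α ; gr(π₁^{Y,A})° = gr(π₁^{X,A})° ; (α ⊠ d_A), where π₁^{X,A} : X×A → X and π₁^{Y,A} : Y×A → Y are first projections. -/
open CategoryTheory

universe w w' v v' u u'

variable {C : Type u} [Category.{v} C] {P : C → C → Type w} [∀ X Y : C, PartialOrder (P X Y)]

open CategoryTheory.Limits

/-- A cartesian structure on a relational doctrine. -/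
structure CartStruct (D : RelDoctrine C P) [HasTerminal C] [HasBinaryProducts C] where
  rprod : ∀ {X Y A B : C}, P X Y → P A B → P (X ⨯ A) (Y ⨯ B)
  rprod_mono : ∀ {X Y A B : C} {α α' : P X Y} {β β' : P A B},
      α ≤ α' → β ≤ β' → rprod α β ≤ rprod α' β'
  rprod_natural : ∀ {X' X Y' Y A' A B' B : C} (f : X' ⟶ X) (g : Y' ⟶ Y)
      (h : A' ⟶ A) (k : B' ⟶ B) (α : P X Y) (β : P A B),
      rprod (D.reidx f g α) (D.reidx h k β) =
        D.reidx (prod.map f h) (prod.map g k) (rprod α β)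
  d_rprod : ∀ X Y : C, D.d (X ⨯ Y) = rprod (D.d X) (D.d Y)
  rprod_comp : ∀ {X Y Z X' Y' Z' : C} (α : P X Y) (β : P Y Z) (α' : P X' Y') (β' : P Y' Z'),
      D.comp (rprod α α') (rprod β β') = rprod (D.comp α β) (D.comp α' β')
  rprod_conv : ∀ {X Y A B : C} (α : P X Y) (β : P A B),
      D.conv (rprod α β) = rprod (D.conv α) (D.conv β)
  le_term : ∀ {X Y : C} (α : P X Y),
      α ≤ D.comp (D.gr (terminal.from X)) (D.conv (D.gr (terminal.from Y)))
  le_fst : ∀ {X Y A B : C} (α : P X Y) (β : P A B),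
      rprod α β ≤ D.comp (D.comp (D.gr (prod.fst : X ⨯ A ⟶ X)) α)
        (D.conv (D.gr (prod.fst : Y ⨯ B ⟶ Y)))
  le_snd : ∀ {X Y A B : C} (α : P X Y) (β : P A B),
      rprod α β ≤ D.comp (D.comp (D.gr (prod.snd : X ⨯ A ⟶ A)) β)
        (D.conv (D.gr (prod.snd : Y ⨯ B ⟶ B)))
  le_diag : ∀ {X Y : C} (α : P X Y),
      α ≤ D.comp (D.comp (D.gr (diag X)) (rprod α α)) (D.conv (D.gr (diag Y)))

namespace CartStruct

variable [HasTerminal C] [HasBinaryProducts C] {D : RelDoctrine C P}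

/-- The fibred binary meet `α ∧ β = gr(Δ) ; (α ⊠ β) ; gr(Δ)°`. -/
noncomputable def meet (CS : CartStruct D) {X Y : C} (α β : P X Y) : P X Y :=
  D.comp (D.comp (D.gr (diag X)) (CS.rprod α β)) (D.conv (D.gr (diag Y)))

/-- Frobenius reciprocity. -/
def Frobenius (CS : CartStruct D) : Prop :=
  ∀ (X Y A : C) (f : X ⟶ Y) (α : P A X) (β : P A Y),
    CS.meet (D.comp α (D.gr f)) β = D.comp (CS.meet α (D.comp β (D.conv (D.gr f)))) (D.gr f)

/-- The modular law. -/
def Modular (CS : CartStruct D) : Prop :=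
  ∀ (A X Y : C) (α : P A X) (β : P A Y) (γ : P X Y),
    CS.meet (D.comp α γ) β ≤ D.comp (CS.meet α (D.comp β (D.conv γ))) γ

end CartStruct

section BeckChevalleyAux

open CategoryTheory.Limits

variable (D : RelDoctrine C P)

lemma grConvEq {X Y : C} (f : X ⟶ Y) :
    D.conv (D.gr f) = D.reidx (𝟙 Y) f (D.d Y) := by
  apply le_antisymm
  · have h := D.conv_reidx_le f (𝟙 Y) (D.d Y)
    rwa [D.conv_d] at h
  · have h := D.conv_reidx_le (𝟙 Y) f (D.d Y)
    rw [D.conv_d] at h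
    have h2 := D.conv_mono h
    rwa [D.conv_conv] at h2

lemma grCompLeft {X Y B : C} (f : X ⟶ Y) (β : P Y B) :
    D.comp (D.gr f) β ≤ D.reidx f (𝟙 B) β := by
  have h := D.comp_reidx_le f (𝟙 Y) (𝟙 B) (D.d Y) β
  rw [D.reidx_id, D.d_comp] at h
  exact h

lemma grConvCompReidx {X Y B : C} (f : X ⟶ Y) (γ : P Y B) :
    D.comp (D.conv (D.gr f)) (D.reidx f (𝟙 B) γ) ≤ γ := by
  have h := D.comp_reidx_le (𝟙 Y) f (𝟙 B) (D.d Y) γ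
  rw [D.d_comp, D.reidx_id] at h
  rw [grConvEq]
  exact h

lemma grFunc {X Y : C} (f : X ⟶ Y) :
    D.comp (D.conv (D.gr f)) (D.gr f) ≤ D.d Y :=
  grConvCompReidx D f (D.d Y)

lemma grId (X : C) : D.gr (𝟙 X) = D.d X := D.reidx_id _

lemma grReidxComp {X Y Z : C} (f : X ⟶ Y) (g : Y ⟶ Z) :
    D.gr (f ≫ g) = D.reidx f (𝟙 Z) (D.gr g) := by
  show D.reidx (f ≫ g) (𝟙 Z) (D.d Z) = D.reidx f (𝟙 Z) (D.reidx g (𝟙 Z) (D.d Z))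
  rw [← D.reidx_comp]
  simp

lemma grCompLe {X Y Z : C} (f : X ⟶ Y) (g : Y ⟶ Z) :
    D.comp (D.gr f) (D.gr g) ≤ D.gr (f ≫ g) := by
  have h := grCompLeft D f (D.gr g)
  rwa [← grReidxComp] at h

lemma grCompOfTotal {X Y Z : C} (f : X ⟶ Y) (g : Y ⟶ Z)
    (hf : D.d X ≤ D.comp (D.gr f) (D.conv (D.gr f))) :
    D.gr (f ≫ g) = D.comp (D.gr f) (D.gr g) := by
  apply le_antisymm _ (grCompLe D f g)
  calc D.gr (f ≫ g) = D.comp (D.d X) (D.gr (f ≫ g)) := (D.d_comp _).symm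
    _ ≤ D.comp (D.comp (D.gr f) (D.conv (D.gr f))) (D.gr (f ≫ g)) := D.comp_mono hf le_rfl
    _ = D.comp (D.gr f) (D.comp (D.conv (D.gr f)) (D.gr (f ≫ g))) := (D.comp_assoc _ _ _).symm
    _ ≤ D.comp (D.gr f) (D.gr g) := by
        refine D.comp_mono le_rfl ?_
        rw [grReidxComp]
        exact grConvCompReidx D f (D.gr g)

lemma totalId (X : C) : D.d X ≤ D.comp (D.gr (𝟙 X)) (D.conv (D.gr (𝟙 X))) := by
  rw [grId, D.conv_d, D.d_comp]

lemma totalComp {X Y Z : C} {f : X ⟶ Y} {g : Y ⟶ Z}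
    (hf : D.d X ≤ D.comp (D.gr f) (D.conv (D.gr f)))
    (hg : D.d Y ≤ D.comp (D.gr g) (D.conv (D.gr g))) :
    D.d X ≤ D.comp (D.gr (f ≫ g)) (D.conv (D.gr (f ≫ g))) := by
  calc D.d X ≤ D.comp (D.gr f) (D.conv (D.gr f)) := hf
    _ = D.comp (D.comp (D.gr f) (D.d Y)) (D.conv (D.gr f)) := by rw [D.comp_d]
    _ ≤ D.comp (D.comp (D.gr f) (D.comp (D.gr g) (D.conv (D.gr g)))) (D.conv (D.gr f)) :=
        D.comp_mono (D.comp_mono le_rfl hg) le_rfl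
    _ = D.comp (D.comp (D.gr f) (D.gr g)) (D.comp (D.conv (D.gr g)) (D.conv (D.gr f))) := by
        rw [D.comp_assoc (D.gr f) (D.gr g) (D.conv (D.gr g)),
          ← D.comp_assoc (D.comp (D.gr f) (D.gr g)) (D.conv (D.gr g)) (D.conv (D.gr f))]
    _ = D.comp (D.comp (D.gr f) (D.gr g)) (D.conv (D.comp (D.gr f) (D.gr g))) := by
        rw [D.conv_comp]
    _ ≤ D.comp (D.gr (f ≫ g)) (D.conv (D.gr (f ≫ g))) :=
        D.comp_mono (grCompLe D f g) (D.conv_mono (grCompLe D f g))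

lemma grConvIso {U V : C} (e : U ⟶ V) (e' : V ⟶ U)
    (h1 : e ≫ e' = 𝟙 U) (h2 : e' ≫ e = 𝟙 V) :
    D.conv (D.gr e) = D.gr e' := by
  apply le_antisymm
  · rw [grConvEq]
    refine le_trans (D.reidx_mono (𝟙 V) e (D.d_le_reidx e')) ?_
    rw [← D.reidx_comp, h1]
    show D.reidx (𝟙 V ≫ e') (𝟙 U) (D.d U) ≤ D.reidx e' (𝟙 U) (D.d U)
    rw [Category.id_comp]
  · show D.reidx e' (𝟙 U) (D.d U) ≤ _
    refine le_trans (D.reidx_mono e' (𝟙 U) (D.d_le_reidx e)) ?_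
    rw [← D.reidx_comp, h2, Category.id_comp, grConvEq]

lemma totalIso {U V : C} (e : U ⟶ V) (e' : V ⟶ U)
    (h1 : e ≫ e' = 𝟙 U) (h2 : e' ≫ e = 𝟙 V) :
    D.d U ≤ D.comp (D.gr e) (D.conv (D.gr e)) := by
  have a1 : D.reidx e' (𝟙 V) (D.gr e) = D.d V := by
    show D.reidx e' (𝟙 V) (D.reidx e (𝟙 V) (D.d V)) = D.d V
    rw [← D.reidx_comp, h2, Category.id_comp, D.reidx_id]
  have a2 : D.reidx (𝟙 V) e' (D.conv (D.gr e)) = D.d V := by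
    rw [grConvEq, ← D.reidx_comp, h2, Category.id_comp, D.reidx_id]
  have key := D.comp_reidx_le e' (𝟙 V) e' (D.gr e) (D.conv (D.gr e))
  rw [a1, a2, D.d_comp] at key
  have key2 := D.reidx_mono e e key
  rw [← D.reidx_comp, h1, D.reidx_id] at key2
  exact le_trans (D.d_le_reidx e) key2

lemma comp3Le {X Y : C} {l : P X X} {m : P X Y} {r : P Y Y}
    (hl : l ≤ D.d X) (hr : r ≤ D.d Y) : D.comp (D.comp l m) r ≤ m := by
  calc D.comp (D.comp l m) r ≤ D.comp (D.comp (D.d X) m) (D.d Y) :=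
        D.comp_mono (D.comp_mono hl le_rfl) hr
    _ = m := by rw [D.d_comp, D.comp_d]

lemma comp4Le {X Y U V : C} {l1 : P X U} {l2 : P U X} {m : P X Y} {r1 : P Y V} {r2 : P V Y}
    (hl : D.comp l1 l2 ≤ D.d X) (hr : D.comp r1 r2 ≤ D.d Y) :
    D.comp (D.comp (D.comp (D.comp l1 l2) m) r1) r2 ≤ m := by
  have e : D.comp (D.comp (D.comp (D.comp l1 l2) m) r1) r2
      = D.comp (D.comp (D.comp l1 l2) m) (D.comp r1 r2) := (D.comp_assoc _ _ _).symm
  rw [e]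
  exact comp3Le D hl hr

variable [HasTerminal C] [HasBinaryProducts C] {D} (CS : CartStruct D)

include CS

lemma grMap {X Y A B : C} (f : X ⟶ Y) (g : A ⟶ B) :
    CS.rprod (D.gr f) (D.gr g) = D.gr (prod.map f g) := by
  show CS.rprod (D.reidx f (𝟙 Y) (D.d Y)) (D.reidx g (𝟙 B) (D.d B)) = _
  rw [CS.rprod_natural, ← CS.d_rprod, prod.map_id_id]
  rfl

lemma totalFst (X A : C) :
    D.d (X ⨯ A) ≤ D.comp (D.gr (prod.fst : X ⨯ A ⟶ X)) (D.conv (D.gr (prod.fst : X ⨯ A ⟶ X))) := by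
  have h := CS.le_fst (D.d X) (D.d A)
  rw [D.comp_d] at h
  calc D.d (X ⨯ A) = CS.rprod (D.d X) (D.d A) := CS.d_rprod X A
    _ ≤ _ := h

lemma totalSnd (X A : C) :
    D.d (X ⨯ A) ≤ D.comp (D.gr (prod.snd : X ⨯ A ⟶ A)) (D.conv (D.gr (prod.snd : X ⨯ A ⟶ A))) := by
  have h := CS.le_snd (D.d X) (D.d A)
  rw [D.comp_d] at h
  calc D.d (X ⨯ A) = CS.rprod (D.d X) (D.d A) := CS.d_rprod X A
    _ ≤ _ := h

lemma totalTerminal (X : C) :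
    D.d X ≤ D.comp (D.gr (terminal.from X)) (D.conv (D.gr (terminal.from X))) :=
  CS.le_term (D.d X)

lemma totalDiag (X : C) :
    D.d X ≤ D.comp (D.gr (diag X)) (D.conv (D.gr (diag X))) := by
  have h := CS.le_diag (D.d X)
  rw [← CS.d_rprod, D.comp_d] at h
  exact h

lemma totalMap {X Y A B : C} {f : X ⟶ Y} {g : A ⟶ B}
    (hf : D.d X ≤ D.comp (D.gr f) (D.conv (D.gr f)))
    (hg : D.d A ≤ D.comp (D.gr g) (D.conv (D.gr g))) :
    D.d (X ⨯ A) ≤ D.comp (D.gr (prod.map f g)) (D.conv (D.gr (prod.map f g))) := by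
  rw [← grMap CS f g, CS.rprod_conv, CS.rprod_comp]
  calc D.d (X ⨯ A) = CS.rprod (D.d X) (D.d A) := CS.d_rprod X A
    _ ≤ _ := CS.rprod_mono hf hg

lemma meetLeLeft {X Y : C} (α β : P X Y) : CS.meet α β ≤ α := by
  have hl : D.comp (D.gr (diag X)) (D.gr (prod.fst : X ⨯ X ⟶ X)) ≤ D.d X := by
    have h := grCompLe D (diag X) (prod.fst : X ⨯ X ⟶ X)
    rw [prod.lift_fst, grId] at h
    exact h
  have hlY : D.comp (D.gr (diag Y)) (D.gr (prod.fst : Y ⨯ Y ⟶ Y)) ≤ D.d Y := by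
    have h := grCompLe D (diag Y) (prod.fst : Y ⨯ Y ⟶ Y)
    rw [prod.lift_fst, grId] at h
    exact h
  have hr : D.comp (D.conv (D.gr (prod.fst : Y ⨯ Y ⟶ Y))) (D.conv (D.gr (diag Y))) ≤ D.d Y := by
    rw [← D.conv_comp]
    have := D.conv_mono hlY
    rwa [D.conv_d] at this
  have h1 : CS.meet α β ≤
      D.comp (D.comp (D.gr (diag X))
        (D.comp (D.comp (D.gr (prod.fst : X ⨯ X ⟶ X)) α) (D.conv (D.gr (prod.fst : Y ⨯ Y ⟶ Y)))))
        (D.conv (D.gr (diag Y))) :=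
    D.comp_mono (D.comp_mono le_rfl (CS.le_fst α β)) le_rfl
  refine le_trans h1 ?_
  have e : D.comp (D.comp (D.gr (diag X))
        (D.comp (D.comp (D.gr (prod.fst : X ⨯ X ⟶ X)) α) (D.conv (D.gr (prod.fst : Y ⨯ Y ⟶ Y)))))
        (D.conv (D.gr (diag Y)))
      = D.comp (D.comp (D.comp (D.comp (D.gr (diag X)) (D.gr (prod.fst : X ⨯ X ⟶ X))) α)
          (D.conv (D.gr (prod.fst : Y ⨯ Y ⟶ Y)))) (D.conv (D.gr (diag Y))) := by
    simp only [D.comp_assoc]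
  rw [e]
  exact comp4Le D hl hr

lemma meetLeRight {X Y : C} (α β : P X Y) : CS.meet α β ≤ β := by
  have hl : D.comp (D.gr (diag X)) (D.gr (prod.snd : X ⨯ X ⟶ X)) ≤ D.d X := by
    have h := grCompLe D (diag X) (prod.snd : X ⨯ X ⟶ X)
    rw [prod.lift_snd, grId] at h
    exact h
  have hlY : D.comp (D.gr (diag Y)) (D.gr (prod.snd : Y ⨯ Y ⟶ Y)) ≤ D.d Y := by
    have h := grCompLe D (diag Y) (prod.snd : Y ⨯ Y ⟶ Y)
    rw [prod.lift_snd, grId] at h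
    exact h
  have hr : D.comp (D.conv (D.gr (prod.snd : Y ⨯ Y ⟶ Y))) (D.conv (D.gr (diag Y))) ≤ D.d Y := by
    rw [← D.conv_comp]
    have := D.conv_mono hlY
    rwa [D.conv_d] at this
  have h1 : CS.meet α β ≤
      D.comp (D.comp (D.gr (diag X))
        (D.comp (D.comp (D.gr (prod.snd : X ⨯ X ⟶ X)) β) (D.conv (D.gr (prod.snd : Y ⨯ Y ⟶ Y)))))
        (D.conv (D.gr (diag Y))) :=
    D.comp_mono (D.comp_mono le_rfl (CS.le_snd α β)) le_rfl
  refine le_trans h1 ?_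
  have e : D.comp (D.comp (D.gr (diag X))
        (D.comp (D.comp (D.gr (prod.snd : X ⨯ X ⟶ X)) β) (D.conv (D.gr (prod.snd : Y ⨯ Y ⟶ Y)))))
        (D.conv (D.gr (diag Y)))
      = D.comp (D.comp (D.comp (D.comp (D.gr (diag X)) (D.gr (prod.snd : X ⨯ X ⟶ X))) β)
          (D.conv (D.gr (prod.snd : Y ⨯ Y ⟶ Y)))) (D.conv (D.gr (diag Y))) := by
    simp only [D.comp_assoc]
  rw [e]
  exact comp4Le D hl hr

lemma leMeet {X Y : C} {γ α β : P X Y} (h1 : γ ≤ α) (h2 : γ ≤ β) : γ ≤ CS.meet α β :=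
  le_trans (CS.le_diag γ) (D.comp_mono (D.comp_mono le_rfl (CS.rprod_mono h1 h2)) le_rfl)

lemma meetComm {X Y : C} (α β : P X Y) : CS.meet α β = CS.meet β α :=
  le_antisymm (leMeet CS (meetLeRight CS α β) (meetLeLeft CS α β))
    (leMeet CS (meetLeRight CS β α) (meetLeLeft CS β α))

lemma convMeet {X Y : C} (α β : P X Y) :
    D.conv (CS.meet α β) = CS.meet (D.conv α) (D.conv β) := by
  have key : ∀ (X Y : C) (α β : P X Y),
      D.conv (CS.meet α β) ≤ CS.meet (D.conv α) (D.conv β) := fun X Y α β =>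
    leMeet CS (D.conv_mono (meetLeLeft CS α β)) (D.conv_mono (meetLeRight CS α β))
  apply le_antisymm (key X Y α β)
  have h := key Y X (D.conv α) (D.conv β)
  rw [D.conv_conv, D.conv_conv] at h
  have h2 := D.conv_mono h
  rwa [D.conv_conv] at h2

lemma rprodEqMeet {X Y A B : C} (α : P X Y) (β : P A B) :
    CS.rprod α β =
      CS.meet
        (D.comp (D.comp (D.gr (prod.fst : X ⨯ A ⟶ X)) α) (D.conv (D.gr (prod.fst : Y ⨯ B ⟶ Y))))
        (D.comp (D.comp (D.gr (prod.snd : X ⨯ A ⟶ A)) β) (D.conv (D.gr (prod.snd : Y ⨯ B ⟶ B)))) := by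
  apply le_antisymm (leMeet CS (CS.le_fst α β) (CS.le_snd α β))
  set c1 := D.comp (D.comp (D.gr (prod.fst : X ⨯ A ⟶ X)) α) (D.conv (D.gr (prod.fst : Y ⨯ B ⟶ Y)))
  set c2 := D.comp (D.comp (D.gr (prod.snd : X ⨯ A ⟶ A)) β) (D.conv (D.gr (prod.snd : Y ⨯ B ⟶ B)))
  have step1 : CS.meet c1 c2 ≤
      D.comp (D.comp (D.gr (diag (X ⨯ A))) (CS.rprod c1 c2)) (D.conv (D.gr (diag (Y ⨯ B)))) :=
    le_trans (CS.le_diag (CS.meet c1 c2))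
      (D.comp_mono (D.comp_mono le_rfl
        (CS.rprod_mono (meetLeLeft CS c1 c2) (meetLeRight CS c1 c2))) le_rfl)
  have step2 : CS.rprod c1 c2 =
      D.comp (D.comp (D.gr (prod.map (prod.fst : X ⨯ A ⟶ X) (prod.snd : X ⨯ A ⟶ A)))
        (CS.rprod α β))
        (D.conv (D.gr (prod.map (prod.fst : Y ⨯ B ⟶ Y) (prod.snd : Y ⨯ B ⟶ B)))) := by
    show CS.rprod c1 c2 = _
    rw [← grMap CS, ← grMap CS, CS.rprod_conv, ← CS.rprod_comp, ← CS.rprod_comp]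
  have hl : D.comp (D.gr (diag (X ⨯ A)))
      (D.gr (prod.map (prod.fst : X ⨯ A ⟶ X) (prod.snd : X ⨯ A ⟶ A))) ≤ D.d (X ⨯ A) := by
    have h := grCompLe D (diag (X ⨯ A)) (prod.map (prod.fst : X ⨯ A ⟶ X) (prod.snd : X ⨯ A ⟶ A))
    rwa [prod.diag_map_fst_snd, grId] at h
  have hlY : D.comp (D.gr (diag (Y ⨯ B)))
      (D.gr (prod.map (prod.fst : Y ⨯ B ⟶ Y) (prod.snd : Y ⨯ B ⟶ B))) ≤ D.d (Y ⨯ B) := by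
    have h := grCompLe D (diag (Y ⨯ B)) (prod.map (prod.fst : Y ⨯ B ⟶ Y) (prod.snd : Y ⨯ B ⟶ B))
    rwa [prod.diag_map_fst_snd, grId] at h
  have hr : D.comp (D.conv (D.gr (prod.map (prod.fst : Y ⨯ B ⟶ Y) (prod.snd : Y ⨯ B ⟶ B))))
      (D.conv (D.gr (diag (Y ⨯ B)))) ≤ D.d (Y ⨯ B) := by
    rw [← D.conv_comp]
    have := D.conv_mono hlY
    rwa [D.conv_d] at this
  refine le_trans step1 ?_
  rw [step2]
  have e : D.comp (D.comp (D.gr (diag (X ⨯ A)))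
        (D.comp (D.comp (D.gr (prod.map (prod.fst : X ⨯ A ⟶ X) (prod.snd : X ⨯ A ⟶ A)))
          (CS.rprod α β))
          (D.conv (D.gr (prod.map (prod.fst : Y ⨯ B ⟶ Y) (prod.snd : Y ⨯ B ⟶ B))))))
        (D.conv (D.gr (diag (Y ⨯ B))))
      = D.comp (D.comp (D.comp (D.comp (D.gr (diag (X ⨯ A)))
          (D.gr (prod.map (prod.fst : X ⨯ A ⟶ X) (prod.snd : X ⨯ A ⟶ A)))) (CS.rprod α β))
          (D.conv (D.gr (prod.map (prod.fst : Y ⨯ B ⟶ Y) (prod.snd : Y ⨯ B ⟶ B)))))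
          (D.conv (D.gr (diag (Y ⨯ B)))) := by
    simp only [D.comp_assoc]
  rw [e]
  exact comp4Le D hl hr

lemma convFrobenius (hF : CS.Frobenius) {U V W : C} (f : U ⟶ V) (a : P U W) (b : P V W) :
    CS.meet (D.comp (D.conv (D.gr f)) a) b =
      D.comp (D.conv (D.gr f)) (CS.meet a (D.comp (D.gr f) b)) := by
  have h := hF U V W f (D.conv a) (D.conv b)
  have h2 := congrArg D.conv h
  simp only [convMeet CS, D.conv_comp, D.conv_conv] at h2
  exact h2


lemma topLeProjComp (X A : C) :
    D.comp (D.gr (terminal.from X)) (D.conv (D.gr (terminal.from A))) ≤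
      D.comp (D.conv (D.gr (prod.fst : X ⨯ A ⟶ X))) (D.gr (prod.snd : X ⨯ A ⟶ A)) := by
  have hup : prod.lift (𝟙 X) (terminal.from X) ≫ (prod.fst : X ⨯ ⊤_ C ⟶ X) = 𝟙 X :=
    prod.lift_fst _ _
  have hpu : (prod.fst : X ⨯ ⊤_ C ⟶ X) ≫ prod.lift (𝟙 X) (terminal.from X) = 𝟙 (X ⨯ ⊤_ C) := by
    apply Limits.prod.hom_ext
    · rw [Category.assoc, hup, Category.comp_id, Category.id_comp]
    · apply terminal.hom_ext
  have hvs : prod.lift (terminal.from A) (𝟙 A) ≫ (prod.snd : (⊤_ C) ⨯ A ⟶ A) = 𝟙 A :=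
    prod.lift_snd _ _
  have hsv : (prod.snd : (⊤_ C) ⨯ A ⟶ A) ≫ prod.lift (terminal.from A) (𝟙 A) = 𝟙 ((⊤_ C) ⨯ A) := by
    apply Limits.prod.hom_ext
    · apply terminal.hom_ext
    · rw [Category.assoc, hvs, Category.comp_id, Category.id_comp]
  have totU : D.d X ≤ D.comp (D.gr (prod.lift (𝟙 X) (terminal.from X)))
      (D.conv (D.gr (prod.lift (𝟙 X) (terminal.from X)))) := totalIso D _ _ hup hpu
  have totV : D.d A ≤ D.comp (D.gr (prod.lift (terminal.from A) (𝟙 A)))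
      (D.conv (D.gr (prod.lift (terminal.from A) (𝟙 A)))) := totalIso D _ _ hvs hsv
  have grpU : D.conv (D.gr (prod.fst : X ⨯ ⊤_ C ⟶ X)) =
      D.gr (prod.lift (𝟙 X) (terminal.from X)) := grConvIso D _ _ hpu hup
  have grvS : D.conv (D.gr (prod.lift (terminal.from A) (𝟙 A))) =
      D.gr (prod.snd : (⊤_ C) ⨯ A ⟶ A) := grConvIso D _ _ hvs hsv
  have hπ : (prod.map (𝟙 X) (terminal.from A)) ≫ (prod.fst : X ⨯ ⊤_ C ⟶ X) =
      (prod.fst : X ⨯ A ⟶ X) := by simp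
  have hσ : (prod.map (terminal.from X) (𝟙 A)) ≫ (prod.snd : (⊤_ C) ⨯ A ⟶ A) =
      (prod.snd : X ⨯ A ⟶ A) := by simp
  have totMA := totalMap CS (totalId D X) (totalTerminal CS A)
  have totMX := totalMap CS (totalTerminal CS X) (totalId D A)
  have grπ : D.gr (prod.fst : X ⨯ A ⟶ X) =
      D.comp (D.gr (prod.map (𝟙 X) (terminal.from A))) (D.gr (prod.fst : X ⨯ ⊤_ C ⟶ X)) := by
    rw [← hπ]; exact grCompOfTotal D _ _ totMA
  have grσ : D.gr (prod.snd : X ⨯ A ⟶ A) =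
      D.comp (D.gr (prod.map (terminal.from X) (𝟙 A))) (D.gr (prod.snd : (⊤_ C) ⨯ A ⟶ A)) := by
    rw [← hσ]; exact grCompOfTotal D _ _ totMX
  have mid : D.comp (D.conv (D.gr (prod.map (𝟙 X) (terminal.from A))))
      (D.gr (prod.map (terminal.from X) (𝟙 A))) =
      CS.rprod (D.gr (terminal.from X)) (D.conv (D.gr (terminal.from A))) := by
    rw [← grMap CS (𝟙 X) (terminal.from A), ← grMap CS (terminal.from X) (𝟙 A),
      CS.rprod_conv, grId, grId, D.conv_d, CS.rprod_comp, D.comp_d, D.d_comp]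
  have rhsEq : D.comp (D.conv (D.gr (prod.fst : X ⨯ A ⟶ X))) (D.gr (prod.snd : X ⨯ A ⟶ A)) =
      D.comp (D.comp (D.gr (prod.lift (𝟙 X) (terminal.from X)))
        (CS.rprod (D.gr (terminal.from X)) (D.conv (D.gr (terminal.from A)))))
        (D.gr (prod.snd : (⊤_ C) ⨯ A ⟶ A)) := by
    rw [grπ, grσ, D.conv_comp, grpU]
    have e1 : D.comp
        (D.comp (D.gr (prod.lift (𝟙 X) (terminal.from X)))
          (D.conv (D.gr (prod.map (𝟙 X) (terminal.from A)))))
        (D.comp (D.gr (prod.map (terminal.from X) (𝟙 A))) (D.gr (prod.snd : (⊤_ C) ⨯ A ⟶ A)))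
        = D.comp (D.comp (D.gr (prod.lift (𝟙 X) (terminal.from X)))
            (D.comp (D.conv (D.gr (prod.map (𝟙 X) (terminal.from A))))
              (D.gr (prod.map (terminal.from X) (𝟙 A)))))
            (D.gr (prod.snd : (⊤_ C) ⨯ A ⟶ A)) := by
      simp only [D.comp_assoc]
    rw [e1, mid]
  rw [rhsEq]
  have t2 := totalDiag CS (⊤_ C)
  have start : D.comp (D.gr (terminal.from X)) (D.conv (D.gr (terminal.from A))) ≤
      D.comp (D.comp (D.gr (terminal.from X))
        (D.comp (D.gr (diag (⊤_ C))) (D.conv (D.gr (diag (⊤_ C))))))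
        (D.conv (D.gr (terminal.from A))) := by
    have e : D.comp (D.gr (terminal.from X)) (D.conv (D.gr (terminal.from A))) =
        D.comp (D.comp (D.gr (terminal.from X)) (D.d (⊤_ C))) (D.conv (D.gr (terminal.from A))) := by
      rw [D.comp_d]
    rw [e]
    exact D.comp_mono (D.comp_mono le_rfl t2) le_rfl
  refine le_trans start ?_
  have e2 : D.comp (D.comp (D.gr (terminal.from X))
        (D.comp (D.gr (diag (⊤_ C))) (D.conv (D.gr (diag (⊤_ C))))))
        (D.conv (D.gr (terminal.from A)))
      = D.comp (D.comp (D.gr (terminal.from X)) (D.gr (diag (⊤_ C))))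
          (D.comp (D.conv (D.gr (diag (⊤_ C)))) (D.conv (D.gr (terminal.from A)))) := by
    simp only [D.comp_assoc]
  rw [e2]
  have hXarr : terminal.from X ≫ diag (⊤_ C) =
      prod.lift (𝟙 X) (terminal.from X) ≫ prod.map (terminal.from X) (𝟙 (⊤_ C)) := by
    apply Limits.prod.hom_ext <;> apply terminal.hom_ext
  have hAarr : terminal.from A ≫ diag (⊤_ C) =
      prod.lift (terminal.from A) (𝟙 A) ≫ prod.map (𝟙 (⊤_ C)) (terminal.from A) := by
    apply Limits.prod.hom_ext <;> apply terminal.hom_ext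
  have lf : D.comp (D.gr (terminal.from X)) (D.gr (diag (⊤_ C))) ≤
      D.comp (D.gr (prod.lift (𝟙 X) (terminal.from X)))
        (D.gr (prod.map (terminal.from X) (𝟙 (⊤_ C)))) := by
    refine le_trans (grCompLe D _ _) ?_
    rw [hXarr]
    exact le_of_eq (grCompOfTotal D _ _ totU)
  have rf : D.comp (D.conv (D.gr (diag (⊤_ C)))) (D.conv (D.gr (terminal.from A))) ≤
      D.comp (D.conv (D.gr (prod.map (𝟙 (⊤_ C)) (terminal.from A))))
        (D.gr (prod.snd : (⊤_ C) ⨯ A ⟶ A)) := by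
    have h1 : D.comp (D.gr (terminal.from A)) (D.gr (diag (⊤_ C))) ≤
        D.comp (D.gr (prod.lift (terminal.from A) (𝟙 A)))
          (D.gr (prod.map (𝟙 (⊤_ C)) (terminal.from A))) := by
      refine le_trans (grCompLe D _ _) ?_
      rw [hAarr]
      exact le_of_eq (grCompOfTotal D _ _ totV)
    have h2 := D.conv_mono h1
    rw [D.conv_comp, D.conv_comp, grvS] at h2
    exact h2
  refine le_trans (D.comp_mono lf rf) ?_
  have mid2 : D.comp (D.gr (prod.map (terminal.from X) (𝟙 (⊤_ C))))
      (D.conv (D.gr (prod.map (𝟙 (⊤_ C)) (terminal.from A)))) =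
      CS.rprod (D.gr (terminal.from X)) (D.conv (D.gr (terminal.from A))) := by
    rw [← grMap CS (terminal.from X) (𝟙 (⊤_ C)), ← grMap CS (𝟙 (⊤_ C)) (terminal.from A),
      CS.rprod_conv, grId, D.conv_d, CS.rprod_comp, D.comp_d, D.d_comp]
  have e3 : D.comp (D.comp (D.gr (prod.lift (𝟙 X) (terminal.from X)))
        (D.gr (prod.map (terminal.from X) (𝟙 (⊤_ C)))))
        (D.comp (D.conv (D.gr (prod.map (𝟙 (⊤_ C)) (terminal.from A))))
          (D.gr (prod.snd : (⊤_ C) ⨯ A ⟶ A)))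
      = D.comp (D.comp (D.gr (prod.lift (𝟙 X) (terminal.from X)))
          (D.comp (D.gr (prod.map (terminal.from X) (𝟙 (⊤_ C))))
            (D.conv (D.gr (prod.map (𝟙 (⊤_ C)) (terminal.from A))))))
          (D.gr (prod.snd : (⊤_ C) ⨯ A ⟶ A)) := by
    simp only [D.comp_assoc]
  rw [e3, mid2]

lemma compConvFstLe (X Y A : C) (α : P X Y) :
    D.comp α (D.conv (D.gr (prod.fst : Y ⨯ A ⟶ Y))) ≤
      D.comp (D.conv (D.gr (prod.fst : X ⨯ A ⟶ X)))
        (D.comp (D.gr (prod.snd : X ⨯ A ⟶ A)) (D.conv (D.gr (prod.snd : Y ⨯ A ⟶ A)))) := by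
  have h1 : D.comp α (D.conv (D.gr (prod.fst : Y ⨯ A ⟶ Y))) ≤
      D.comp (D.comp (D.gr (terminal.from X)) (D.conv (D.gr (terminal.from Y))))
        (D.conv (D.gr (prod.fst : Y ⨯ A ⟶ Y))) :=
    D.comp_mono (CS.le_term α) le_rfl
  have h2 : D.comp (D.conv (D.gr (terminal.from Y))) (D.conv (D.gr (prod.fst : Y ⨯ A ⟶ Y))) ≤
      D.comp (D.conv (D.gr (terminal.from A))) (D.conv (D.gr (prod.snd : Y ⨯ A ⟶ A))) := by
    rw [← D.conv_comp, ← D.conv_comp]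
    apply D.conv_mono
    refine le_trans (grCompLe D _ _) ?_
    rw [terminal.comp_from]
    have e : terminal.from (Y ⨯ A) = (prod.snd : Y ⨯ A ⟶ A) ≫ terminal.from A :=
      (terminal.comp_from _).symm
    rw [e, grCompOfTotal D _ _ (totalSnd CS Y A)]
  refine le_trans h1 ?_
  have e1 : D.comp (D.comp (D.gr (terminal.from X)) (D.conv (D.gr (terminal.from Y))))
        (D.conv (D.gr (prod.fst : Y ⨯ A ⟶ Y)))
      = D.comp (D.gr (terminal.from X))
          (D.comp (D.conv (D.gr (terminal.from Y))) (D.conv (D.gr (prod.fst : Y ⨯ A ⟶ Y)))) := by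
    simp only [D.comp_assoc]
  rw [e1]
  refine le_trans (D.comp_mono (le_refl (D.gr (terminal.from X))) h2) ?_
  have e2 : D.comp (D.gr (terminal.from X))
        (D.comp (D.conv (D.gr (terminal.from A))) (D.conv (D.gr (prod.snd : Y ⨯ A ⟶ A))))
      = D.comp (D.comp (D.gr (terminal.from X)) (D.conv (D.gr (terminal.from A))))
          (D.conv (D.gr (prod.snd : Y ⨯ A ⟶ A))) := D.comp_assoc _ _ _
  rw [e2]
  refine le_trans (D.comp_mono (topLeProjComp CS X A) le_rfl) ?_
  rw [← D.comp_assoc]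

end BeckChevalleyAux


open CategoryTheory.Limits in
/-- Frobenius reciprocity implies the Beck–Chevalley condition. -/
theorem statement15 [HasTerminal C] [HasBinaryProducts C]
    (D : RelDoctrine C P) (CS : CartStruct D) (hF : CS.Frobenius)
    (X Y A : C) (α : P X Y) :
    D.comp α (D.conv (D.gr (prod.fst : Y ⨯ A ⟶ Y))) =
      D.comp (D.conv (D.gr (prod.fst : X ⨯ A ⟶ X))) (CS.rprod α (D.d A)) := by
  have hA := rprodEqMeet CS α (D.d A)
  rw [D.comp_d, ← D.comp_assoc] at hA
  have key : D.comp (D.conv (D.gr (prod.fst : X ⨯ A ⟶ X))) (CS.rprod α (D.d A)) =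
      CS.meet (D.comp (D.conv (D.gr (prod.fst : X ⨯ A ⟶ X)))
          (D.comp (D.gr (prod.snd : X ⨯ A ⟶ A)) (D.conv (D.gr (prod.snd : Y ⨯ A ⟶ A)))))
        (D.comp α (D.conv (D.gr (prod.fst : Y ⨯ A ⟶ Y)))) := by
    rw [hA, meetComm CS
      (D.comp (D.gr (prod.fst : X ⨯ A ⟶ X)) (D.comp α (D.conv (D.gr (prod.fst : Y ⨯ A ⟶ Y)))))
      (D.comp (D.gr (prod.snd : X ⨯ A ⟶ A)) (D.conv (D.gr (prod.snd : Y ⨯ A ⟶ A))))]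
    exact (convFrobenius CS hF prod.fst _ _).symm
  rw [key]
  apply le_antisymm
  · exact leMeet CS (compConvFstLe CS X Y A α) le_rfl
  · exact meetLeRight CS _ _
end
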